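/- In a normed lattice X, if every norm-null net has an order bounded tail, then X has a strong unit u and the norm of X is equivalent to the order unit norm ‖·‖_u. -/

import Mathlib

open Filter Topology

universe u

section Aux

variable {X : Type u} [NormedAddCommGroup X] [Lattice X] [IsOrderedAddMonoid X] [HasSolidNorm X] [NormedSpace ℝ X]

private lemma aux_pow2 (k : ℕ) (w : X) (h : 0 ≤ (2 ^ k : ℕ) • w) : 0 ≤ w := by
  induction k generalizing w with
  | zero => simpa using h
  | succ n ih =>
    have h2 : (2 ^ (n + 1) : ℕ) • w = (2 ^ n : ℕ) • ((2 : ℕ) • w) := by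
      rw [← mul_smul, ← pow_succ]
    exact nsmul_two_semiclosed (ih _ (by rwa [h2] at h))

private lemma aux_dyadic (a k : ℕ) (z : X) (hz : 0 ≤ z) :
    0 ≤ ((a : ℝ) / 2 ^ k) • z := by
  have hw : 0 ≤ ((2 : ℝ) ^ k)⁻¹ • z := by
    apply aux_pow2 k
    have : (2 ^ k : ℕ) • (((2 : ℝ) ^ k)⁻¹ • z) = z := by
      rw [← Nat.cast_smul_eq_nsmul ℝ, smul_smul]
      push_cast
      rw [mul_inv_cancel₀ (by positivity), one_smul]
    rw [this]; exact hz
  have : ((a : ℝ) / 2 ^ k) • z = a • (((2 : ℝ) ^ k)⁻¹ • z) := by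
    rw [← Nat.cast_smul_eq_nsmul ℝ, smul_smul, div_eq_mul_inv]
  rw [this]
  exact nsmul_nonneg hw a

private lemma aux_smul_nonneg {r : ℝ} (hr : 0 ≤ r) {z : X} (hz : 0 ≤ z) :
    0 ≤ r • z := by
  set f : ℕ → ℝ := fun n => (⌈r * 2 ^ n⌉₊ : ℝ) / 2 ^ n with hf
  have hmem : ∀ n, 0 ≤ f n • z := fun n => aux_dyadic _ n z hz
  have hdist : ∀ n : ℕ, |f n - r| ≤ ((2 : ℝ) ^ n)⁻¹ := by
    intro n
    have h2 : (0 : ℝ) < 2 ^ n := by positivity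
    have hle : r ≤ f n := by
      rw [hf, le_div_iff₀ h2]
      exact Nat.le_ceil _
    have hub : f n - r ≤ ((2 : ℝ) ^ n)⁻¹ := by
      rw [hf, sub_le_iff_le_add, div_le_iff₀ h2, add_mul, inv_mul_cancel₀ (ne_of_gt h2)]
      have := (Nat.ceil_lt_add_one (by positivity : (0:ℝ) ≤ r * 2 ^ n)).le
      linarith
    rw [abs_of_nonneg (by linarith)]
    exact hub
  have htend : Tendsto (fun n => f n • z) atTop (𝓝 (r • z)) := by
    rw [tendsto_iff_norm_sub_tendsto_zero]
    apply squeeze_zero (fun n => norm_nonneg _) (g := fun n => ‖z‖ * (2⁻¹ : ℝ) ^ n)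
    · intro n
      have : f n • z - r • z = (f n - r) • z := by rw [sub_smul]
      rw [this, norm_smul, Real.norm_eq_abs]
      calc |f n - r| * ‖z‖ ≤ ((2 : ℝ) ^ n)⁻¹ * ‖z‖ :=
            mul_le_mul_of_nonneg_right (hdist n) (norm_nonneg z)
        _ = ‖z‖ * (2⁻¹ : ℝ) ^ n := by rw [inv_pow]; ring
    · simpa using (tendsto_pow_atTop_nhds_zero_of_lt_one (by norm_num : (0:ℝ) ≤ 2⁻¹)
        (by norm_num : (2⁻¹ : ℝ) < 1)).const_mul ‖z‖
  exact isClosed_nonneg.mem_of_tendsto htend (Eventually.of_forall hmem)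

private lemma aux_smul_mono {r : ℝ} (hr : 0 ≤ r) {a b : X} (hab : a ≤ b) :
    r • a ≤ r • b := by
  have := aux_smul_nonneg hr (sub_nonneg.2 hab)
  rw [smul_sub] at this
  exact sub_nonneg.1 this

private lemma aux_abs_smul_le {r : ℝ} (hr : 0 ≤ r) (x : X) : |r • x| ≤ r • |x| := by
  refine abs_le'.2 ⟨aux_smul_mono hr (le_abs_self x), ?_⟩
  rw [← smul_neg]
  exact aux_smul_mono hr (neg_le_abs x)

end Aux

theorem stmt_10 {X : Type u} [NormedAddCommGroup X] [Lattice X] [IsOrderedAddMonoid X] [HasSolidNorm X] [NormedSpace ℝ X]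
    (h : ∀ (ι : Type u) [Preorder ι] [IsDirected ι (· ≤ ·)] [Nonempty ι]
      (x : ι → X), Tendsto (fun α => ‖x α‖) atTop (𝓝 0) →
      ∃ α₀ : ι, ∃ a b : X, ∀ α ≥ α₀, x α ∈ Set.Icc a b) :
    ∃ u : X, 0 ≤ u ∧ (∀ x : X, ∃ r : ℝ, 0 ≤ r ∧ |x| ≤ r • u) ∧
      ∃ c C : ℝ, 0 < c ∧ 0 < C ∧ ∀ x : X,
        c * sInf {r : ℝ | 0 ≤ r ∧ |x| ≤ r • u} ≤ ‖x‖ ∧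
        ‖x‖ ≤ C * sInf {r : ℝ | 0 ≤ r ∧ |x| ≤ r • u} := by
  classical
  -- the index type: pairs (n, y) with y in the closed unit ball, ordered by n
  let ι : Type u := ℕ × {y : X // ‖y‖ ≤ 1}
  let pre : Preorder ι := Preorder.lift Prod.fst
  have dir : @IsDirected ι (fun a b => pre.le a b) :=
    ⟨fun p q => ⟨(max p.1 q.1, p.2), by exact le_max_left p.1 q.1, by exact le_max_right p.1 q.1⟩⟩
  have ne : Nonempty ι := ⟨(0, ⟨0, by simp⟩)⟩
  let net : ι → X := fun p => ((p.1 : ℝ) + 1)⁻¹ • p.2.val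
  have hfst : Tendsto (Prod.fst : ι → ℕ) (@atTop ι pre) atTop := by
    rw [@tendsto_atTop_atTop ι ℕ ne pre dir _ _]
    intro b
    exact ⟨(b, ⟨0, by simp⟩), fun a ha => ha⟩
  have htend : Tendsto (fun α => ‖net α‖) (@atTop ι pre) (𝓝 0) := by
    apply squeeze_zero (fun p => norm_nonneg _) (g := fun p => ((p.1 : ℝ) + 1)⁻¹)
    · intro p
      have hpos : (0 : ℝ) < (p.1 : ℝ) + 1 := by positivity
      rw [norm_smul, Real.norm_eq_abs, abs_of_pos (inv_pos.2 hpos)]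
      calc ((p.1 : ℝ) + 1)⁻¹ * ‖p.2.val‖ ≤ ((p.1 : ℝ) + 1)⁻¹ * 1 :=
            mul_le_mul_of_nonneg_left p.2.2 (le_of_lt (inv_pos.2 hpos))
        _ = ((p.1 : ℝ) + 1)⁻¹ := mul_one _
    · have : (fun p : ι => ((p.1 : ℝ) + 1)⁻¹) = (fun n : ℕ => ((n : ℝ) + 1)⁻¹) ∘ Prod.fst :=
        rfl
      rw [this]
      refine Tendsto.comp ?_ hfst
      simpa [one_div] using tendsto_one_div_add_atTop_nhds_zero_nat (𝕜 := ℝ)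
  obtain ⟨α₀, a, b, hab⟩ := @h ι pre dir ne net htend
  set n₀ : ℕ := α₀.1 with hn₀
  have hc : (0 : ℝ) < (n₀ : ℝ) + 1 := by positivity
  set v : X := |a| ⊔ |b| with hv
  have hv0 : 0 ≤ v := le_trans (abs_nonneg a) le_sup_left
  set uu : X := ((n₀ : ℝ) + 1) • v with huu
  have huu0 : 0 ≤ uu := aux_smul_nonneg hc.le hv0
  -- every element of the unit ball scaled by ((n₀+1))⁻¹ is in [a,b]
  have hball : ∀ y : X, ‖y‖ ≤ 1 → ((n₀ : ℝ) + 1)⁻¹ • y ∈ Set.Icc a b := by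
    intro y hy
    exact hab (n₀, ⟨y, hy⟩) (le_refl n₀)
  -- every element of the unit ball is dominated by uu
  have hkey : ∀ y : X, ‖y‖ ≤ 1 → |y| ≤ uu := by
    intro y hy
    have h1 := hball y hy
    have h2 := hball (-y) (by rwa [norm_neg])
    have habs : |((n₀ : ℝ) + 1)⁻¹ • y| ≤ v := by
      refine abs_le'.2 ⟨le_trans h1.2 (le_trans (le_abs_self b) le_sup_right), ?_⟩
      rw [← smul_neg]
      exact le_trans h2.2 (le_trans (le_abs_self b) le_sup_right)
    have hyeq : y = ((n₀ : ℝ) + 1) • (((n₀ : ℝ) + 1)⁻¹ • y) := by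
      rw [smul_smul, mul_inv_cancel₀ (ne_of_gt hc), one_smul]
    calc |y| = |((n₀ : ℝ) + 1) • (((n₀ : ℝ) + 1)⁻¹ • y)| := by rw [← hyeq]
      _ ≤ ((n₀ : ℝ) + 1) • |((n₀ : ℝ) + 1)⁻¹ • y| := aux_abs_smul_le hc.le _
      _ ≤ ((n₀ : ℝ) + 1) • v := aux_smul_mono hc.le habs
      _ = uu := rfl
  -- the main domination estimate : |x| ≤ ‖x‖ • uu
  have hmain : ∀ x : X, |x| ≤ ‖x‖ • uu := by
    intro x
    rcases eq_or_ne x 0 with rfl | hx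
    · simp
    · have hnx : (0 : ℝ) < ‖x‖ := norm_pos_iff.2 hx
      have hy : ‖‖x‖⁻¹ • x‖ ≤ 1 := by
        rw [norm_smul, Real.norm_eq_abs, abs_of_pos (inv_pos.2 hnx),
          inv_mul_cancel₀ (ne_of_gt hnx)]
      have hxeq : x = ‖x‖ • (‖x‖⁻¹ • x) := by
        rw [smul_smul, mul_inv_cancel₀ (ne_of_gt hnx), one_smul]
      calc |x| = |‖x‖ • (‖x‖⁻¹ • x)| := by rw [← hxeq]
        _ ≤ ‖x‖ • |‖x‖⁻¹ • x| := aux_abs_smul_le hnx.le _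
        _ ≤ ‖x‖ • uu := aux_smul_mono hnx.le (hkey _ hy)
  refine ⟨uu, huu0, fun x => ⟨‖x‖, norm_nonneg x, hmain x⟩, 1, ‖uu‖ + 1, one_pos,
    by positivity, fun x => ?_⟩
  set S : Set ℝ := {r : ℝ | 0 ≤ r ∧ |x| ≤ r • uu} with hS
  have hxS : ‖x‖ ∈ S := ⟨norm_nonneg x, hmain x⟩
  have hbdd : BddBelow S := ⟨0, fun r hr => hr.1⟩
  constructor
  · rw [one_mul]
    exact csInf_le hbdd hxS
  · -- for each r ∈ S we have ‖x‖ ≤ r * (‖uu‖+1)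
    have hCpos : (0 : ℝ) < ‖uu‖ + 1 := by positivity
    have hlb : ∀ r ∈ S, (‖uu‖ + 1)⁻¹ * ‖x‖ ≤ r := by
      rintro r ⟨hr0, hrx⟩
      have hru : 0 ≤ r • uu := le_trans (abs_nonneg x) hrx
      have h1 : ‖x‖ ≤ ‖r • uu‖ := by
        apply HasSolidNorm.solid
        rwa [abs_of_nonneg hru]
      have h2 : ‖x‖ ≤ r * (‖uu‖ + 1) := by
        rw [norm_smul, Real.norm_eq_abs, abs_of_nonneg hr0] at h1
        nlinarith [norm_nonneg uu]
      rw [inv_mul_le_iff₀ hCpos, mul_comm]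
      exact h2
    have := le_csInf ⟨‖x‖, hxS⟩ hlb
    calc ‖x‖ = (‖uu‖ + 1) * ((‖uu‖ + 1)⁻¹ * ‖x‖) := by
          field_simp
      _ ≤ (‖uu‖ + 1) * sInf S := mul_le_mul_of_nonneg_left this hCpos.le
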